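/- Let G be a connected loopless multigraph on a finite vertex set V such that 2·x = 0 for every element x of the Jacobian Jac(G) (i.e., the exponent of Jac(G) divides 2). Then w(u,v) ≤ 2 for all vertices u, v, and the underlying simple graph of G is acyclic; that is, G is a tree in which some edges have been doubled. -/

import Mathlib

open Finset

variable {V : Type*}

/-- Degree of a vertex in the loopless multigraph with edge-multiplicity function `w`. -/
def mgDeg [Fintype V] (w : V → V → ℕ) (v : V) : ℕ := ∑ u, w v u

/-- The Laplacian of the multigraph, as an additive homomorphism on `V → ℤ`. -/
def mgLap [Fintype V] (w : V → V → ℕ) : (V → ℤ) →+ (V → ℤ) :=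
  AddMonoidHom.mk' (fun f v => (mgDeg w v : ℤ) * f v - ∑ u, (w v u : ℤ) * f u)
    (by
      intro f g
      funext v
      simp [mul_add, Finset.sum_add_distrib]
      ring)

/-- The group `Div⁰(G)` of divisors of degree zero. -/
def mgDiv0 (V : Type*) [Fintype V] : AddSubgroup (V → ℤ) :=
  AddMonoidHom.ker
    (AddMonoidHom.mk' (fun D : V → ℤ => ∑ v, D v)
      (by intro a b; simp [Finset.sum_add_distrib]))

/-- The group `Prin(G)` of principal divisors, the image of the Laplacian. -/
def mgPrin [Fintype V] (w : V → V → ℕ) : AddSubgroup (V → ℤ) := (mgLap w).range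

/-- The Jacobian `Jac(G) = Div⁰(G)/Prin(G)`. -/
abbrev mgJac (V : Type*) [Fintype V] (w : V → V → ℕ) : Type _ :=
  mgDiv0 V ⧸ ((mgPrin w).addSubgroupOf (mgDiv0 V))

/-- The underlying simple graph: `u` adjacent to `v` iff `u ≠ v` and `w u v > 0`. -/
def mgUnderlying (w : V → V → ℕ) : SimpleGraph V :=
  SimpleGraph.fromRel (fun u v => 0 < w u v)

lemma mgLap_apply [Fintype V] (w : V → V → ℕ) (f : V → ℤ) (v : V) :
    mgLap w f v = ∑ u, (w v u : ℤ) * (f v - f u) := by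
  show (mgDeg w v : ℤ) * f v - ∑ u, (w v u : ℤ) * f u = _
  simp only [mgDeg, mul_sub, Finset.sum_sub_distrib, Finset.sum_mul, Nat.cast_sum]

lemma maxprop [Fintype V] [DecidableEq V] (w : V → V → ℕ) (hsym : ∀ u v, w u v = w v u)
    (hconn : (mgUnderlying w).Connected) (a b : V) (f : V → ℤ)
    (hL : ∀ v, ∑ u, (w v u : ℤ) * (f v - f u) =
      (if v = a then 2 else 0) - (if v = b then 2 else 0)) :
    (∀ v, f v ≤ f a) ∧
    ∀ x y, x ≠ a → f x = f a → (mgUnderlying w).Adj x y → f y = f a := by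
  have step : ∀ x y, (∀ u, f u ≤ f x) → x ≠ a → (mgUnderlying w).Adj x y → f y = f x := by
    intro x y hmax hxa hadj
    have hterms : ∀ u ∈ (univ : Finset V), 0 ≤ (w x u : ℤ) * (f x - f u) := by
      intro u _
      exact mul_nonneg (by positivity) (by linarith [hmax u])
    have hsum : ∑ u, (w x u : ℤ) * (f x - f u) = 0 := by
      refine le_antisymm ?_ (Finset.sum_nonneg hterms)
      rw [hL x]
      simp only [if_neg hxa]
      split <;> omega
    have hzero := (Finset.sum_eq_zero_iff_of_nonneg hterms).mp hsum y (mem_univ y)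
    have hw : 0 < w x y := by
      rcases (SimpleGraph.fromRel_adj _ _ _).mp hadj with ⟨hne, h | h⟩
      · exact h
      · rw [hsym]; exact h
    rcases mul_eq_zero.mp hzero with h | h
    · exfalso; have : (0:ℤ) < (w x y : ℤ) := by exact_mod_cast hw
      omega
    · omega
  obtain ⟨c, -, hc⟩ := Finset.exists_max_image (univ : Finset V) f ⟨a, mem_univ a⟩
  have hca : f a = f c := by
    have keyw : ∀ x v (p : (mgUnderlying w).Walk x v), f x = f c → (f v = f c ∨ f a = f c) := by
      intro x v p
      induction p with
      | nil => exact fun h => Or.inl h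
      | cons h q ih =>
        intro hx
        rename_i x y _
        by_cases hxa : x = a
        · exact Or.inr (hxa ▸ hx)
        · refine ih ?_
          have := step x y (fun u => hx ▸ hc u (mem_univ u)) hxa h
          omega
    obtain ⟨p⟩ := hconn.preconnected c a
    rcases keyw c a p rfl with h | h <;> exact h
  have hmax : ∀ v, f v ≤ f a := fun v => hca ▸ hc v (mem_univ v)
  refine ⟨hmax, fun x y hxa hxfa hadj => ?_⟩
  have := step x y (fun u => hxfa ▸ hmax u) hxa hadj
  omega

lemma key [Fintype V] [DecidableEq V] (w : V → V → ℕ) (hsym : ∀ u v, w u v = w v u)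
    (hconn : (mgUnderlying w).Connected)
    (hexp : ∀ x : mgJac V w, 2 • x = 0) {a b : V}
    (hadj : (mgUnderlying w).Adj a b) :
    w a b ≤ 2 ∧ (mgUnderlying w).IsBridge s(a, b) := by
  have hab : a ≠ b := hadj.ne
  have hadj' : ∀ x y : V, (mgUnderlying w).Adj x y → 0 < w x y := by
    intro x y h
    rcases (SimpleGraph.fromRel_adj _ _ _).mp h with ⟨hne, h | h⟩
    · exact h
    · rw [hsym]; exact h
  set D : V → ℤ := fun v => (if v = a then 1 else 0) - (if v = b then 1 else 0) with hDdef
  have hD : D ∈ mgDiv0 V := by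
    simp [mgDiv0, AddMonoidHom.mem_ker, hDdef, Finset.sum_sub_distrib]
  have hx := hexp (QuotientAddGroup.mk' _ ⟨D, hD⟩)
  rw [← map_nsmul, QuotientAddGroup.mk'_apply, QuotientAddGroup.eq_zero_iff,
    AddSubgroup.mem_addSubgroupOf] at hx
  obtain ⟨f, hf⟩ := hx
  have hL : ∀ v, ∑ u, (w v u : ℤ) * (f v - f u) =
      (if v = a then 2 else 0) - (if v = b then 2 else 0) := by
    intro v
    rw [← mgLap_apply, hf]
    show (2:ℕ) • (D v) = _
    simp only [hDdef, nsmul_eq_mul, Nat.cast_ofNat]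
    split_ifs <;> norm_num
  obtain ⟨hmaxa, hpropa⟩ := maxprop w hsym hconn a b f hL
  have hL' : ∀ v, ∑ u, (w v u : ℤ) * ((-f) v - (-f) u) =
      (if v = b then 2 else 0) - (if v = a then 2 else 0) := by
    intro v
    have h1 : ∑ u, (w v u : ℤ) * ((-f) v - (-f) u) = -∑ u, (w v u : ℤ) * (f v - f u) := by
      rw [← Finset.sum_neg_distrib]
      exact Finset.sum_congr rfl (fun u _ => by simp; ring)
    rw [h1, hL v]; ring
  obtain ⟨hminb', hpropb'⟩ := maxprop w hsym hconn b a (-f) hL'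
  have hminb : ∀ v, f b ≤ f v := by
    intro v; have := hminb' v; simp only [Pi.neg_apply] at this; omega
  have hpropb : ∀ x y, x ≠ b → f x = f b → (mgUnderlying w).Adj x y → f y = f b := by
    intro x y hx hfx hxy
    have := hpropb' x y hx (by simp [hfx]) hxy
    simp only [Pi.neg_apply] at this; omega
  have hLa : ∑ u, (w a u : ℤ) * (f a - f u) = 2 := by
    rw [hL a]; simp [hab]
  have hLb : ∑ u, (w b u : ℤ) * (f u - f b) = 2 := by
    have h0 : ∑ u, (w b u : ℤ) * (f b - f u) = -2 := by
      rw [hL b]; simp [Ne.symm hab]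
    have h1 : ∑ u, (w b u : ℤ) * (f u - f b) = -∑ u, (w b u : ℤ) * (f b - f u) := by
      rw [← Finset.sum_neg_distrib]
      exact Finset.sum_congr rfl (fun u _ => by ring)
    rw [h1, h0]; ring
  have htermsa : ∀ u ∈ (univ : Finset V), 0 ≤ (w a u : ℤ) * (f a - f u) := by
    intro u _; exact mul_nonneg (by positivity) (by linarith [hmaxa u])
  have htermsb : ∀ u ∈ (univ : Finset V), 0 ≤ (w b u : ℤ) * (f u - f b) := by
    intro u _; exact mul_nonneg (by positivity) (by linarith [hminb u])
  have hwab : 0 < w a b := hadj' a b hadj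
  have hwabZ : (1 : ℤ) ≤ (w a b : ℤ) := by exact_mod_cast hwab
  have hfab : f b < f a := by
    by_contra h
    push_neg at h
    have hz : ∀ u ∈ (univ : Finset V), (w a u : ℤ) * (f a - f u) = 0 := by
      intro u _
      have h1 := hmaxa u; have h2 := hminb u
      have : f a - f u = 0 := by omega
      rw [this, mul_zero]
    rw [Finset.sum_congr rfl hz] at hLa
    simp at hLa
  have hsingle : (w a b : ℤ) * (f a - f b) ≤ 2 := by
    rw [← hLa]; exact Finset.single_le_sum htermsa (mem_univ b)
  have hwb2 : w a b ≤ 2 := by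
    have h1 : (w a b : ℤ) ≤ (w a b : ℤ) * (f a - f b) := by nlinarith
    have : (w a b : ℤ) ≤ 2 := le_trans h1 hsingle
    exact_mod_cast this
  have hd2 : f a - f b ≤ 2 := by nlinarith
  have hcover : ∀ v, f v = f a ∨ f v = f b := by
    have hd : f a - f b = 1 ∨ f a - f b = 2 := by omega
    rcases hd with hd | hd
    · intro v; have := hmaxa v; have := hminb v; omega
    · have hterm_b : (w a b : ℤ) * (f a - f b) = 2 := by nlinarith
      have hterm_b' : (w b a : ℤ) * (f a - f b) = 2 := by rw [hsym b a]; exact hterm_b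
      have hzeroa : ∀ u, u ≠ b → (w a u : ℤ) * (f a - f u) = 0 := by
        have hsum0 : ∑ u ∈ univ.erase b, (w a u : ℤ) * (f a - f u) = 0 := by
          have h1 := Finset.add_sum_erase univ (fun u => (w a u : ℤ) * (f a - f u)) (mem_univ b)
          rw [hterm_b] at h1
          omega
        intro u hub
        exact (Finset.sum_eq_zero_iff_of_nonneg
          (fun u hu => htermsa u (mem_univ u))).mp hsum0 u (Finset.mem_erase.mpr ⟨hub, mem_univ u⟩)
      have hzerob : ∀ u, u ≠ a → (w b u : ℤ) * (f u - f b) = 0 := by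
        have hsum0 : ∑ u ∈ univ.erase a, (w b u : ℤ) * (f u - f b) = 0 := by
          have h1 := Finset.add_sum_erase univ (fun u => (w b u : ℤ) * (f u - f b)) (mem_univ a)
          rw [hterm_b'] at h1
          omega
        intro u hua
        exact (Finset.sum_eq_zero_iff_of_nonneg
          (fun u hu => htermsb u (mem_univ u))).mp hsum0 u (Finset.mem_erase.mpr ⟨hua, mem_univ u⟩)
      have stepc : ∀ x y, (f x = f a ∨ f x = f b) → (mgUnderlying w).Adj x y →
          (f y = f a ∨ f y = f b) := by
        intro x y hx hxy
        by_cases hxa : x = a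
        · subst hxa
          by_cases hyb : y = b
          · right; rw [hyb]
          · left
            have h0 := hzeroa y hyb
            have hw : (0 : ℤ) < (w x y : ℤ) := by exact_mod_cast hadj' x y hxy
            rcases mul_eq_zero.mp h0 with h | h
            · omega
            · omega
        · by_cases hxb : x = b
          · subst hxb
            by_cases hya : y = a
            · left; rw [hya]
            · right
              have h0 := hzerob y hya
              have hw : (0 : ℤ) < (w x y : ℤ) := by exact_mod_cast hadj' x y hxy
              rcases mul_eq_zero.mp h0 with h | h
              · omega
              · omega
          · rcases hx with hx | hx
            · exact Or.inl (hpropa x y hxa hx hxy)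
            · exact Or.inr (hpropb x y hxb hx hxy)
      intro v
      have hwalk : ∀ x v (p : (mgUnderlying w).Walk x v), (f x = f a ∨ f x = f b) →
          (f v = f a ∨ f v = f b) := by
        intro x v p
        induction p with
        | nil => exact id
        | cons h q ih => exact fun hx => ih (stepc _ _ hx h)
      obtain ⟨p⟩ := hconn.preconnected a v
      exact hwalk a v p (Or.inl rfl)
  have hcross : ∀ x y, (mgUnderlying w).Adj x y → f x = f a → f y = f b → x = a ∧ y = b := by
    intro x y hxy hx hy
    constructor
    · by_contra hxa
      have := hpropa x y hxa hx hxy; omega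
    · by_contra hyb
      have := hpropb y x hyb hy hxy.symm; omega
  refine ⟨hwb2, ?_⟩
  rw [SimpleGraph.isBridge_iff]
  intro hreach
  obtain ⟨p⟩ := hreach
  have hwalk : ∀ x v (p : ((mgUnderlying w) \ SimpleGraph.fromEdgeSet {s(a, b)}).Walk x v),
      f x = f a → f v = f b → False := by
    intro x v p
    induction p with
    | nil => intro hx hv; omega
    | cons h q ih =>
      intro hx hv
      rename_i x y _
      have hG : (mgUnderlying w).Adj x y := ((SimpleGraph.sdiff_adj _ _ _ _).mp h).1
      have hnot : ¬ (SimpleGraph.fromEdgeSet {s(a, b)}).Adj x y :=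
        ((SimpleGraph.sdiff_adj _ _ _ _).mp h).2
      rcases hcover y with hy | hy
      · exact ih hy hv
      · obtain ⟨rfl, rfl⟩ := hcross x y hG hx hy
        exact hnot (by rw [SimpleGraph.fromEdgeSet_adj]; exact ⟨by simp, hG.ne⟩)
  exact hwalk a b p rfl rfl


/-- a connected loopless multigraph in which every element of the Jacobian is
killed by 2 has all edge multiplicities at most 2 and acyclic underlying simple graph,
i.e. it is a tree with some edges doubled. -/
theorem stmt5 (V : Type*) [Fintype V] [DecidableEq V] (w : V → V → ℕ)
    (hsym : ∀ u v, w u v = w v u) (hloop : ∀ v, w v v = 0)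
    (hconn : (mgUnderlying w).Connected)
    (hexp : ∀ x : mgJac V w, 2 • x = 0) :
    (∀ u v : V, w u v ≤ 2) ∧ (mgUnderlying w).IsAcyclic := by
  constructor
  · intro u v
    by_cases huv : u = v
    · rw [huv, hloop]; omega
    · by_cases hw : 0 < w u v
      · have hadj : (mgUnderlying w).Adj u v := by
          exact (SimpleGraph.fromRel_adj _ _ _).mpr ⟨huv, Or.inl hw⟩
        exact (key w hsym hconn hexp hadj).1
      · omega
  · rw [SimpleGraph.isAcyclic_iff_forall_adj_isBridge]
    intro u v hadj
    exact (key w hsym hconn hexp hadj).2
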